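/- The function g: [0,π] → R defined by g(φ) = (2φ - sin(2φ))/(2φ²) for φ > 0 and g(0) = 0 attains its maximum at φ = π/2 with g(π/2) = 2/π; it is strictly increasing on [0, π/2] with range [0, 2/π], and strictly decreasing on [π/2, π] with range [1/π, 2/π]. -/

import Mathlib

open scoped Real

noncomputable section

/-- The function `g(φ) = (2φ - sin 2φ)/(2φ²)`, `g(0) = 0`, parametrizing the vertical
profile of the unit Carnot–Carathéodory ball of the Heisenberg group. -/
def gProf (φ : ℝ) : ℝ := if φ = 0 then 0 else (2 * φ - Real.sin (2 * φ)) / (2 * φ ^ 2)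

lemma gProf_eq {φ : ℝ} (h : φ ≠ 0) :
    gProf φ = (2 * φ - Real.sin (2 * φ)) / (2 * φ ^ 2) := if_neg h

lemma gProf_zero : gProf 0 = 0 := if_pos rfl

lemma gProf_pi_div_two : gProf (π / 2) = 2 / π := by
  have hπ := Real.pi_pos
  rw [gProf_eq (by positivity)]
  have h : 2 * (π / 2) = π := by ring
  rw [h, Real.sin_pi]
  field_simp
  ring

lemma gProf_pi : gProf π = 1 / π := by
  have hπ := Real.pi_pos
  rw [gProf_eq (by positivity), Real.sin_two_pi]
  field_simp
  ring

lemma sin_sub_mul_cos_pos {φ : ℝ} (h0 : 0 < φ) (h1 : φ < π) :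
    0 < Real.sin φ - φ * Real.cos φ := by
  rcases le_or_gt (Real.cos φ) 0 with hc | hc
  · have hs : 0 < Real.sin φ := Real.sin_pos_of_pos_of_lt_pi h0 h1
    nlinarith
  · have hφ : φ < π / 2 := by
      by_contra hle
      push_neg at hle
      have : Real.cos φ ≤ 0 :=
        Real.cos_nonpos_of_pi_div_two_le_of_le hle (by linarith [Real.pi_pos])
      linarith
    have ht := Real.lt_tan h0 hφ
    rw [Real.tan_eq_sin_div_cos] at ht
    have := (lt_div_iff₀ hc).mp ht
    linarith

lemma gProf_hasDerivAt {φ : ℝ} (h : φ ≠ 0) :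
    HasDerivAt gProf ((Real.sin (2 * φ) - φ * (1 + Real.cos (2 * φ))) / φ ^ 3) φ := by
  have h2 : HasDerivAt (fun x : ℝ => 2 * x) 2 φ := by
    simpa using (hasDerivAt_id φ).const_mul 2
  have hsin : HasDerivAt (fun x : ℝ => Real.sin (2 * x)) (Real.cos (2 * φ) * 2) φ :=
    (Real.hasDerivAt_sin (2 * φ)).comp φ h2
  have hnum : HasDerivAt (fun x : ℝ => 2 * x - Real.sin (2 * x))
      (2 - Real.cos (2 * φ) * 2) φ := h2.sub hsin
  have hsq : HasDerivAt (fun x : ℝ => x ^ 2) (2 * φ) φ := by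
    simpa using hasDerivAt_pow 2 φ
  have hden : HasDerivAt (fun x : ℝ => 2 * x ^ 2) (2 * (2 * φ)) φ := hsq.const_mul 2
  have hden_ne : 2 * φ ^ 2 ≠ 0 := by positivity
  have hform := hnum.div hden hden_ne
  have heq : gProf =ᶠ[nhds φ]
      fun x => (2 * x - Real.sin (2 * x)) / (2 * x ^ 2) := by
    filter_upwards [eventually_ne_nhds h] with x hx
    exact gProf_eq hx
  have := hform.congr_of_eventuallyEq heq
  convert this using 1
  all_goals first | rfl | (field_simp; ring)

lemma gProf_deriv_eq {φ : ℝ} (h : φ ≠ 0) :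
    deriv gProf φ = 2 * Real.cos φ * (Real.sin φ - φ * Real.cos φ) / φ ^ 3 := by
  rw [(gProf_hasDerivAt h).deriv, Real.sin_two_mul, Real.cos_two_mul]
  ring_nf

lemma gProf_contOn : ContinuousOn gProf (Set.Icc 0 (π / 2)) := by
  intro x hx
  rcases eq_or_ne x 0 with rfl | hx0
  · rw [ContinuousWithinAt, gProf_zero]
    apply squeeze_zero' (g := fun x : ℝ => x)
    · rw [eventually_nhdsWithin_iff]
      filter_upwards [Metric.ball_mem_nhds (0 : ℝ) (by norm_num : (0:ℝ) < 1/2)]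
        with y hy hy'
      rcases eq_or_ne y 0 with rfl | hy0
      · rw [gProf_zero]
      · have hypos : 0 < y := lt_of_le_of_ne hy'.1 (Ne.symm hy0)
        rw [gProf_eq hy0]
        have hnum : 0 < 2 * y - Real.sin (2 * y) := by
          have := Real.sin_lt (by linarith : (0:ℝ) < 2 * y)
          linarith
        positivity
    · rw [eventually_nhdsWithin_iff]
      filter_upwards [Metric.ball_mem_nhds (0 : ℝ) (by norm_num : (0:ℝ) < 1/2)]
        with y hy hy'
      simp only [Metric.mem_ball, Real.dist_eq, sub_zero] at hy
      rcases eq_or_ne y 0 with rfl | hy0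
      · rw [gProf_zero]
      · have hypos : 0 < y := lt_of_le_of_ne hy'.1 (Ne.symm hy0)
        have hyle : y < 1 / 2 := lt_of_abs_lt hy
        rw [gProf_eq hy0]
        rw [div_le_iff₀ (by positivity)]
        have := Real.sin_gt_sub_cube (by linarith : (0:ℝ) < 2 * y)
        nlinarith
    · exact Filter.tendsto_id.mono_left nhdsWithin_le_nhds
  · exact (gProf_hasDerivAt hx0).continuousAt.continuousWithinAt

lemma gProf_strictMonoOn : StrictMonoOn gProf (Set.Icc 0 (π / 2)) := by
  apply strictMonoOn_of_deriv_pos (convex_Icc _ _) gProf_contOn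
  intro x hx
  rw [interior_Icc] at hx
  have hx0 : x ≠ 0 := ne_of_gt hx.1
  rw [gProf_deriv_eq hx0]
  have hπ := Real.pi_pos
  have hc : 0 < Real.cos x := Real.cos_pos_of_mem_Ioo ⟨by linarith [hx.1], hx.2⟩
  have hs := sin_sub_mul_cos_pos hx.1 (by linarith [hx.2])
  have hx3 : 0 < x ^ 3 := pow_pos hx.1 3
  exact div_pos (by nlinarith) hx3

lemma gProf_strictAntiOn : StrictAntiOn gProf (Set.Icc (π / 2) π) := by
  have hπ := Real.pi_pos
  apply strictAntiOn_of_deriv_neg (convex_Icc _ _)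
  · intro x hx
    have hx0 : x ≠ 0 := ne_of_gt (lt_of_lt_of_le (by linarith) hx.1)
    exact (gProf_hasDerivAt hx0).continuousAt.continuousWithinAt
  · intro x hx
    rw [interior_Icc] at hx
    have hxpos : 0 < x := by linarith [hx.1]
    rw [gProf_deriv_eq (ne_of_gt hxpos)]
    have hc : Real.cos x < 0 := Real.cos_neg_of_pi_div_two_lt_of_lt hx.1 (by linarith [hx.2])
    have hs := sin_sub_mul_cos_pos hxpos hx.2
    have hx3 : 0 < x ^ 3 := pow_pos hxpos 3
    apply div_neg_of_neg_of_pos _ hx3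
    nlinarith

/-- `g` attains its maximum on `[0,π]` at `π/2` with value `2/π`; it is strictly
increasing on `[0,π/2]` with range `[0,2/π]` and strictly decreasing on `[π/2,π]` with
range `[1/π,2/π]`. -/
theorem stmt4 :
    gProf (π / 2) = 2 / π ∧
    IsMaxOn gProf (Set.Icc 0 π) (π / 2) ∧
    StrictMonoOn gProf (Set.Icc 0 (π / 2)) ∧
    gProf '' Set.Icc 0 (π / 2) = Set.Icc 0 (2 / π) ∧
    StrictAntiOn gProf (Set.Icc (π / 2) π) ∧
    gProf '' Set.Icc (π / 2) π = Set.Icc (1 / π) (2 / π) := by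
  have hπ := Real.pi_pos
  have h02 : (0:ℝ) ≤ π / 2 := by linarith
  have h2π : π / 2 ≤ π := by linarith
  have hmono := gProf_strictMonoOn
  have hanti := gProf_strictAntiOn
  have hcont2 : ContinuousOn gProf (Set.Icc (π / 2) π) := by
    intro x hx
    have hx0 : x ≠ 0 := by
      have : 0 < x := lt_of_lt_of_le (by linarith) hx.1
      exact ne_of_gt this
    exact (gProf_hasDerivAt hx0).continuousAt.continuousWithinAt
  refine ⟨gProf_pi_div_two, ?_, hmono, ?_, hanti, ?_⟩
  · intro x hx
    simp only [Set.mem_setOf_eq]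
    rcases le_or_gt x (π / 2) with hle | hlt
    · exact hmono.monotoneOn ⟨hx.1, hle⟩ (Set.right_mem_Icc.mpr h02) hle
    · exact hanti.antitoneOn (Set.left_mem_Icc.mpr h2π) ⟨le_of_lt hlt, hx.2⟩ (le_of_lt hlt)
  · apply Set.Subset.antisymm
    · rintro _ ⟨x, hx, rfl⟩
      constructor
      · have := hmono.monotoneOn (Set.left_mem_Icc.mpr h02) hx hx.1
        rwa [gProf_zero] at this
      · have := hmono.monotoneOn hx (Set.right_mem_Icc.mpr h02) hx.2
        rwa [gProf_pi_div_two] at this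
    · have := intermediate_value_Icc h02 gProf_contOn
      rwa [gProf_zero, gProf_pi_div_two] at this
  · apply Set.Subset.antisymm
    · rintro _ ⟨x, hx, rfl⟩
      constructor
      · have := hanti.antitoneOn hx (Set.right_mem_Icc.mpr h2π) hx.2
        rwa [gProf_pi] at this
      · have := hanti.antitoneOn (Set.left_mem_Icc.mpr h2π) hx hx.1
        rwa [gProf_pi_div_two] at this
    · have := intermediate_value_Icc' h2π hcont2
      rwa [gProf_pi, gProf_pi_div_two] at this
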